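/- Let (x, y) : J → ℝ² be a twice differentiable solution on an open interval J of the reduced system ẍ = (q/m²)(p_z − q A(x,y,t)) ∂A/∂x(x,y,t), ÿ = (q/m²)(p_z − q A(x,y,t)) ∂A/∂y(x,y,t), with (x(t), y(t), t) ∈ U for all t ∈ J. If x(t₀) = ẋ(t₀) = 0 for some t₀ ∈ J, then x(t) = 0 for all t ∈ J. -/

import Mathlib

open Real Set

lemma aux_fwd {f f' : ℝ → ℝ × ℝ} {C s e : ℝ}
    (hd : ∀ t ∈ Icc s e, HasDerivAt f (f' t) t)
    (hb : ∀ t ∈ Icc s e, ‖f' t‖ ≤ C * ‖f t‖)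
    (h0 : f s = 0) : ∀ t ∈ Icc s e, f t = 0 := by
  intro t ht
  have h := norm_le_gronwallBound_of_norm_deriv_right_le
    (f := f) (f' := f') (δ := 0) (K := C) (ε := 0) (a := s) (b := e)
    (fun u hu => (hd u hu).continuousAt.continuousWithinAt)
    (fun u hu => (hd u (Ico_subset_Icc_self hu)).hasDerivWithinAt)
    (by simp [h0]) (fun u hu => by simpa using hb u (Ico_subset_Icc_self hu)) t ht
  rw [gronwallBound_ε0_δ0] at h
  exact norm_le_zero_iff.mp h

lemma aux_bwd {f f' : ℝ → ℝ × ℝ} {C s e : ℝ}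
    (hd : ∀ t ∈ Icc e s, HasDerivAt f (f' t) t)
    (hb : ∀ t ∈ Icc e s, ‖f' t‖ ≤ C * ‖f t‖)
    (h0 : f s = 0) : ∀ t ∈ Icc e s, f t = 0 := by
  intro t ht
  set g : ℝ → ℝ × ℝ := fun u => f (e + s - u) with hgdef
  have hrefl : ∀ u ∈ Icc e s, e + s - u ∈ Icc e s := by
    intro u hu
    exact ⟨by linarith [hu.2], by linarith [hu.1]⟩
  have hg : ∀ u ∈ Icc e s, HasDerivAt g (-f' (e + s - u)) u := by
    intro u hu
    have h1 : HasDerivAt (fun u : ℝ => e + s - u) (-1) u := by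
      simpa using (hasDerivAt_id u).const_sub (e + s)
    have := (hd _ (hrefl u hu)).scomp u h1
    rw [neg_one_smul] at this
    exact this
  have hgb : ∀ u ∈ Icc e s, ‖-f' (e + s - u)‖ ≤ C * ‖g u‖ := by
    intro u hu
    simpa using hb _ (hrefl u hu)
  have h0' : g e = 0 := by simp [hgdef, h0]
  have := aux_fwd hg hgb h0' (e + s - t) (hrefl t ht)
  simpa [hgdef, show e + s - (e + s - t) = t by ring] using this

/-- If the partial derivative `∂A/∂x` vanishes on the plane `x = 0`, then every solution
of the reduced system with `x(t₀) = ẋ(t₀) = 0` at some time `t₀` satisfies `x ≡ 0`. -/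
theorem plane_invariant
    (m q p_z : ℝ) (hm : 0 < m)
    (U : Set (ℝ × ℝ × ℝ)) (hU : IsOpen U)
    (A : ℝ × ℝ × ℝ → ℝ) (hA : ContDiffOn ℝ 2 A U)
    (hAx : ∀ p ∈ U, p.1 = 0 → fderiv ℝ A p (1, 0, 0) = 0)
    (a b : ℝ)
    (x y x' y' x'' y'' : ℝ → ℝ)
    (hmem : ∀ t ∈ Set.Ioo a b, (x t, y t, t) ∈ U)
    (hx : ∀ t ∈ Set.Ioo a b, HasDerivAt x (x' t) t)
    (hy : ∀ t ∈ Set.Ioo a b, HasDerivAt y (y' t) t)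
    (hx' : ∀ t ∈ Set.Ioo a b, HasDerivAt x' (x'' t) t)
    (hy' : ∀ t ∈ Set.Ioo a b, HasDerivAt y' (y'' t) t)
    (heqx : ∀ t ∈ Set.Ioo a b,
      x'' t = (q / m ^ 2) * (p_z - q * A (x t, y t, t))
        * fderiv ℝ A (x t, y t, t) (1, 0, 0))
    (heqy : ∀ t ∈ Set.Ioo a b,
      y'' t = (q / m ^ 2) * (p_z - q * A (x t, y t, t))
        * fderiv ℝ A (x t, y t, t) (0, 1, 0))
    (t₀ : ℝ) (ht₀ : t₀ ∈ Set.Ioo a b)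
    (hx0 : x t₀ = 0) (hx'0 : x' t₀ = 0) :
    ∀ t ∈ Set.Ioo a b, x t = 0 := by
  classical
  -- the set of "good" times
  set G : Set ℝ := {t | t ∈ Ioo a b ∧ x t = 0 ∧ x' t = 0} with hGdef
  -- Key local statement: around a good time, all nearby times are good.
  have key : ∀ s₀ ∈ Ioo a b, x s₀ = 0 → x' s₀ = 0 →
      ∀ᶠ t in nhds s₀, x t = 0 ∧ x' t = 0 := by
    intro s₀ hs₀ hxs hx's
    set P : ℝ × ℝ × ℝ := ((0 : ℝ), y s₀, s₀) with hPdef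
    have hPeq : (x s₀, y s₀, s₀) = P := by rw [hxs]
    have hP : P ∈ U := hPeq ▸ hmem s₀ hs₀
    set g : ℝ × ℝ × ℝ → ℝ := fun p => fderiv ℝ A p (1, 0, 0) with hgdef
    have hA2 : ContDiffAt ℝ 2 A P := hA.contDiffAt (hU.mem_nhds hP)
    have hgC : ContDiffAt ℝ 1 g P :=
      (hA2.fderiv_right (by norm_num)).clm_apply contDiffAt_const
    obtain ⟨K, ts, hts, hK⟩ := hgC.exists_lipschitzOnWith
    obtain ⟨r, hr0, hball⟩ := Metric.mem_nhds_iff.mp (Filter.inter_mem hts (hU.mem_nhds hP))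
    -- continuity facts at s₀
    have hxc : ContinuousAt x s₀ := (hx s₀ hs₀).continuousAt
    have hyc : ContinuousAt y s₀ := (hy s₀ hs₀).continuousAt
    have hcurve : ContinuousAt (fun t => (x t, y t, t)) s₀ :=
      hxc.prodMk (hyc.prodMk continuousAt_id)
    have hcurve0 : ContinuousAt (fun t => ((0 : ℝ), y t, t)) s₀ :=
      continuousAt_const.prodMk (hyc.prodMk continuousAt_id)
    set c : ℝ → ℝ := fun t => (q / m ^ 2) * (p_z - q * A (x t, y t, t)) with hcdef
    have hcc : ContinuousAt c s₀ := by
      have hAc : ContinuousAt A (x s₀, y s₀, s₀) := hPeq ▸ hA2.continuousAt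
      have hAcc : ContinuousAt (fun t => A (x t, y t, t)) s₀ :=
        ContinuousAt.comp (f := fun t => (x t, y t, t)) hAc hcurve
      exact continuousAt_const.mul
        (continuousAt_const.sub (continuousAt_const.mul hAcc))
    set M : ℝ := |c s₀| + 1 with hMdef
    have hM0 : 0 ≤ M := by positivity
    -- eventual facts
    have hev : ∀ᶠ t in nhds s₀,
        (x t, y t, t) ∈ Metric.ball P r ∧ ((0 : ℝ), y t, t) ∈ Metric.ball P r ∧
          |c t| ≤ M ∧ t ∈ Ioo a b := by
      have h1 : ∀ᶠ t in nhds s₀, (x t, y t, t) ∈ Metric.ball P r :=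
        hcurve.eventually_mem (s := Metric.ball P r)
          (by rw [hPeq]; exact Metric.ball_mem_nhds _ hr0)
      have h2 : ∀ᶠ t in nhds s₀, ((0 : ℝ), y t, t) ∈ Metric.ball P r :=
        hcurve0.eventually_mem (s := Metric.ball P r)
          (Metric.ball_mem_nhds _ hr0)
      have h3 : ∀ᶠ t in nhds s₀, |c t| ≤ M := by
        have : ContinuousAt (fun t => |c t|) s₀ := hcc.abs
        have hlt : |c s₀| < M := by simp [hMdef]
        exact this.eventually_le_const hlt
      have h4 : ∀ᶠ t in nhds s₀, t ∈ Ioo a b := isOpen_Ioo.mem_nhds hs₀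
      filter_upwards [h1, h2, h3, h4] with t a1 a2 a3 a4 using ⟨a1, a2, a3, a4⟩
    obtain ⟨δ, hδ0, hδ⟩ := Metric.eventually_nhds_iff_ball.mp hev
    -- the key derivative bound on the ball
    set C : ℝ := max 1 (M * K) with hCdef
    set f : ℝ → ℝ × ℝ := fun t => (x t, x' t) with hfdef
    set f' : ℝ → ℝ × ℝ := fun t => (x' t, x'' t) with hf'def
    have hfd : ∀ t ∈ Metric.ball s₀ δ, HasDerivAt f (f' t) t := by
      intro t ht
      exact (hx t (hδ t ht).2.2.2).prodMk (hx' t (hδ t ht).2.2.2)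
    have hfb : ∀ t ∈ Metric.ball s₀ δ, ‖f' t‖ ≤ C * ‖f t‖ := by
      intro t ht
      obtain ⟨hb1, hb2, hb3, hb4⟩ := hδ t ht
      have hg0 : g ((0 : ℝ), y t, t) = 0 :=
        hAx _ ((hball hb2).2) rfl
      have hdist : dist ((x t, y t, t) : ℝ × ℝ × ℝ) ((0 : ℝ), y t, t) = |x t| := by
        simp [Prod.dist_eq, Real.dist_eq]
      have hglip : |g (x t, y t, t)| ≤ K * |x t| := by
        have := hK.dist_le_mul _ (hball hb1).1 _ (hball hb2).1
        rw [hg0, hdist] at this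
        simpa [Real.dist_eq] using this
      have hx'' : |x'' t| ≤ M * K * |x t| := by
        have : x'' t = c t * g (x t, y t, t) := heqx t hb4
        rw [this, abs_mul]
        calc |c t| * |g (x t, y t, t)| ≤ M * (K * |x t|) := by
              apply mul_le_mul hb3 hglip (abs_nonneg _) hM0
          _ = M * K * |x t| := by ring
      have hC1 : (1 : ℝ) ≤ C := le_max_left _ _
      have hCMK : M * K ≤ C := le_max_right _ _
      have hnf : ‖f t‖ = max |x t| |x' t| := by
        simp [hfdef, Prod.norm_def, Real.norm_eq_abs]
      have hnf' : ‖f' t‖ = max |x' t| |x'' t| := by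
        simp [hf'def, Prod.norm_def, Real.norm_eq_abs]
      rw [hnf, hnf']
      have hmax0 : 0 ≤ max |x t| |x' t| := le_max_of_le_left (abs_nonneg _)
      apply max_le
      · calc |x' t| ≤ max |x t| |x' t| := le_max_right _ _
          _ = 1 * max |x t| |x' t| := (one_mul _).symm
          _ ≤ C * max |x t| |x' t| := by
              apply mul_le_mul_of_nonneg_right hC1 hmax0
      · calc |x'' t| ≤ M * K * |x t| := hx''
          _ ≤ C * max |x t| |x' t| := by
              apply mul_le_mul hCMK (le_max_left _ _) (abs_nonneg _)
                (le_trans zero_le_one hC1)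
    have hfs₀ : f s₀ = 0 := by simp [hfdef, hxs, hx's, Prod.ext_iff]
    -- conclude on the ball
    rw [Metric.eventually_nhds_iff_ball]
    refine ⟨δ, hδ0, fun t ht => ?_⟩
    have hsub : ∀ u v : ℝ, u ∈ Metric.ball s₀ δ → v ∈ Icc s₀ u ∨ v ∈ Icc u s₀ →
        v ∈ Metric.ball s₀ δ := by
      intro u v hu hv
      rw [Metric.mem_ball, Real.dist_eq] at hu ⊢
      rcases abs_lt.mp hu with ⟨h1, h2⟩
      rcases hv with hv | hv
      · exact abs_lt.mpr ⟨by linarith [hv.1], by linarith [hv.2]⟩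
      · exact abs_lt.mpr ⟨by linarith [hv.1], by linarith [hv.2]⟩
    have hft : f t = 0 := by
      rcases le_total s₀ t with hle | hle
      · exact aux_fwd (fun u hu => hfd u (hsub t u ht (Or.inl hu)))
          (fun u hu => hfb u (hsub t u ht (Or.inl hu))) hfs₀ t ⟨hle, le_rfl⟩
      · exact aux_bwd (fun u hu => hfd u (hsub t u ht (Or.inr hu)))
          (fun u hu => hfb u (hsub t u ht (Or.inr hu))) hfs₀ t ⟨le_rfl, hle⟩
    have := Prod.ext_iff.mp hft
    exact ⟨this.1, this.2⟩
  -- G is open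
  have hGopen : IsOpen G := by
    rw [isOpen_iff_mem_nhds]
    intro s hs
    have h1 := key s hs.1 hs.2.1 hs.2.2
    have h2 : ∀ᶠ t in nhds s, t ∈ Ioo a b := isOpen_Ioo.mem_nhds hs.1
    filter_upwards [h1, h2] with t ha1 ha2 using ⟨ha2, ha1⟩
  -- limit points of G in Ioo a b are in G
  have hGlim : closure G ∩ Ioo a b ⊆ G := by
    rintro t ⟨htc, htI⟩
    refine ⟨htI, ?_, ?_⟩
    · have hc : ContinuousWithinAt x G t := (hx t htI).continuousAt.continuousWithinAt
      have := hc.mem_closure_image htc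
      have himg : x '' G ⊆ {0} := by rintro _ ⟨u, hu, rfl⟩; exact hu.2.1
      have := closure_mono himg this
      simpa using this
    · have hc : ContinuousWithinAt x' G t := (hx' t htI).continuousAt.continuousWithinAt
      have := hc.mem_closure_image htc
      have himg : x' '' G ⊆ {0} := by rintro _ ⟨u, hu, rfl⟩; exact hu.2.2
      have := closure_mono himg this
      simpa using this
  have hne : (Ioo a b ∩ G).Nonempty := ⟨t₀, ht₀, ht₀, hx0, hx'0⟩
  have := (isPreconnected_Ioo (a := a) (b := b)).subset_of_closure_inter_subset hGopen hne hGlim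
  intro t ht
  exact (this ht).2.1
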